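/- Consider a sequence of multisets of natural numbers M_0, M_1, …, M_L where M_0 consists of n copies of the number 4, each M_{i+1} is obtained from M_i by removing two equal elements a and a and inserting their sum 2a (a merge of two equal-sized groups), and the final multiset M_L has no repeated elements. Then the number of merges is L = n − popcount(n). -/
import Mathlib


/-- The number of 1 bits in the binary representation of `n`. -/
def popcount (n : ℕ) : ℕ := (Nat.digits 2 n).sum

/-- One merge step: remove two equal elements `a` and insert their sum `2·a`. -/
def MergeStep (M M' : Multiset ℕ) : Prop :=
  ∃ a R, M = a ::ₘ a ::ₘ R ∧ M' = 2 * a ::ₘ R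

lemma popcount_two_mul (m : ℕ) : popcount (2 * m) = popcount m := by
  rcases Nat.eq_zero_or_pos m with rfl | hm
  · simp
  · unfold popcount
    rw [Nat.digits_def' (by norm_num) (by omega)]
    simp [Nat.mul_div_cancel_left _ (by norm_num : 0 < 2)]

lemma popcount_two_mul_add_one (m : ℕ) :
    popcount (2 * m + 1) = popcount m + 1 := by
  unfold popcount
  rw [Nat.digits_def' (by norm_num) (by omega)]
  have h1 : (2 * m + 1) % 2 = 1 := by omega
  have h2 : (2 * m + 1) / 2 = m := by omega
  rw [h1, h2, List.sum_cons, Nat.add_comm]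

lemma popcount_eq_length (n : ℕ) : popcount n = n.bitIndices.length := by
  induction n using Nat.strong_induction_on with
  | _ n ih =>
    rcases Nat.eq_zero_or_pos n with rfl | hn
    · simp [popcount]
    rcases Nat.even_or_odd n with ⟨m, hm⟩ | ⟨m, hm⟩
    · have hm' : n = 2 * m := by omega
      subst hm'
      rw [popcount_two_mul, Nat.bitIndices_two_mul, List.length_map,
        ih m (by omega)]
    · subst hm
      rw [popcount_two_mul_add_one, Nat.bitIndices_two_mul_add_one,
        List.length_cons, List.length_map, ih m (by omega)]

lemma popcount_sum_two_pow (F : Finset ℕ) :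
    popcount (∑ i ∈ F, 2 ^ i) = F.card := by
  rw [popcount_eq_length]
  conv_rhs => rw [← Finset.toFinset_bitIndices_twoPowSum F]
  rw [List.toFinset_card_of_nodup Nat.bitIndices_sorted.nodup]

/-- Starting from `n` copies of `4` and merging two equal elements into their
sum until no two elements are equal, the number of merges is `n − popcount n`. -/
theorem merge_count (n L : ℕ) (M : ℕ → Multiset ℕ)
    (h0 : M 0 = Multiset.replicate n 4)
    (hstep : ∀ i < L, MergeStep (M i) (M (i + 1)))
    (hfinal : (M L).Nodup) :
    L = n - popcount n := by
  -- invariants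
  have hinv : ∀ i ≤ L, Multiset.card (M i) + i = n ∧ (M i).sum = 4 * n ∧
      ∀ x ∈ M i, ∃ k, x = 2 ^ k := by
    intro i hi
    induction i with
    | zero =>
      refine ⟨by simp [h0], by simp [h0, Multiset.sum_replicate, mul_comm], ?_⟩
      intro x hx
      rw [h0] at hx
      exact ⟨2, by simpa using (Multiset.eq_of_mem_replicate hx)⟩
    | succ i ih =>
      obtain ⟨hcard, hsum, hpow⟩ := ih (by omega)
      obtain ⟨a, R, hMi, hMi1⟩ := hstep i (by omega)
      refine ⟨?_, ?_, ?_⟩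
      · rw [hMi1]; rw [hMi] at hcard; simp at hcard ⊢; omega
      · rw [hMi1]; rw [hMi] at hsum; simp at hsum ⊢; omega
      · intro x hx
        rw [hMi1] at hx
        rcases Multiset.mem_cons.1 hx with rfl | hx
        · obtain ⟨k, hk⟩ := hpow a (by rw [hMi]; simp)
          exact ⟨k + 1, by rw [hk, pow_succ, mul_comm]⟩
        · exact hpow x (by rw [hMi]; simp [hx])
  obtain ⟨hcard, hsum, hpow⟩ := hinv L le_rfl
  -- build the finset of exponents
  set S := M L with hS
  have hinj : ∀ x ∈ S, ∀ y ∈ S, Nat.log 2 x = Nat.log 2 y → x = y := by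
    intro x hx y hy hxy
    obtain ⟨k, rfl⟩ := hpow x hx
    obtain ⟨l, rfl⟩ := hpow y hy
    rw [Nat.log_pow (by norm_num), Nat.log_pow (by norm_num)] at hxy
    rw [hxy]
  have hTnodup : (S.map (Nat.log 2)).Nodup := Multiset.Nodup.map_on hinj hfinal
  set F : Finset ℕ := ⟨S.map (Nat.log 2), hTnodup⟩ with hF
  have hmapback : (S.map (Nat.log 2)).map (2 ^ ·) = S := by
    rw [Multiset.map_map]
    conv_rhs => rw [← Multiset.map_id S]
    apply Multiset.map_congr rfl
    intro x hx
    obtain ⟨k, rfl⟩ := hpow x hx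
    simp [Nat.log_pow (by norm_num : 1 < 2)]
  have hFsum : ∑ i ∈ F, 2 ^ i = 4 * n := by
    rw [← hsum]
    show ((S.map (Nat.log 2)).map (2 ^ ·)).sum = S.sum
    rw [hmapback]
  have hFcard : F.card = Multiset.card S := by
    show Multiset.card (S.map (Nat.log 2)) = _
    rw [Multiset.card_map]
  have hpn : popcount (4 * n) = Multiset.card S := by
    rw [← hFsum, popcount_sum_two_pow, hFcard]
  have h4 : popcount (4 * n) = popcount n := by
    have : 4 * n = 2 * (2 * n) := by ring
    rw [this, popcount_two_mul, popcount_two_mul]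
  omega
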